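/- arXiv:2506.14242 — 6 statements merged into one kernel-verified Lean document; each statement's English description precedes it below -/
import Mathlib

section
/- Let f : ℝ^m → [0,∞) be a probability density such that ∫ f(x)^q dx < ∞ for all q in some neighborhood of 1 and the Shannon differential entropy H(f) = −∫ f(x) log f(x) dx is finite. Then the Tsallis entropy converges to the Shannon entropy as q → 1: lim_{q→1} H_q(f) = H(f). -/
open MeasureTheory Filter Topology

lemma abs_log_le_add_inv {s : ℝ} (hs : 0 < s) : |Real.log s| ≤ s + s⁻¹ := by
  refine abs_le.2 ⟨?_, ?_⟩
  · have h1 : Real.log s⁻¹ ≤ s⁻¹ - 1 := Real.log_le_sub_one_of_pos (by positivity)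
    rw [Real.log_inv] at h1
    nlinarith [hs.le, inv_pos.2 hs]
  · have h1 : Real.log s ≤ s - 1 := Real.log_le_sub_one_of_pos hs
    nlinarith [hs.le, (inv_pos.2 hs).le]

lemma rpow_le_add_of_mem {t s lo hi : ℝ} (ht : 0 < t) (h1 : lo ≤ s) (h2 : s ≤ hi) :
    t ^ s ≤ t ^ lo + t ^ hi := by
  rcases le_total 1 t with h | h
  · have := Real.rpow_le_rpow_of_exponent_le h h2
    have h0 : 0 ≤ t ^ lo := Real.rpow_nonneg ht.le _
    linarith
  · have := Real.rpow_le_rpow_of_exponent_ge ht h h1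
    have h0 : 0 ≤ t ^ hi := Real.rpow_nonneg ht.le _
    linarith

/-- **Tsallis entropy converges to Shannon entropy as `q → 1`.**
If `f` is a probability density on `ℝ^m` with `∫ f^q < ∞` for all `q` in a neighborhood
of `1` and finite Shannon differential entropy `H(f) = -∫ f log f`, then
`H_q(f) = (1/(1-q))(∫ f^q - 1) → H(f)` as `q → 1`. -/
theorem tsallis_tendsto_shannon (m : ℕ)
    (f : (Fin m → ℝ) → ℝ)
    (hf0 : ∀ x, 0 ≤ f x) (hfmeas : Measurable f) (hf1 : ∫ x, f x = 1)
    (hnbhd : ∃ ε > (0 : ℝ), ∀ q : ℝ, |q - 1| < ε → Integrable (fun x => f x ^ q))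
    (hent : Integrable (fun x => f x * Real.log (f x))) :
    Tendsto (fun q : ℝ => (1 / (1 - q)) * ((∫ x, f x ^ q) - 1))
      (𝓝[≠] (1 : ℝ)) (𝓝 (-∫ x, f x * Real.log (f x))) := by
  obtain ⟨ε, hε, hint⟩ := hnbhd
  set a : ℝ := min ε 1 / 4 with ha_def
  have ha0 : 0 < a := by
    have : 0 < min ε 1 := lt_min hε one_pos
    positivity
  have haε : 2 * a < ε := by
    have h1 : min ε 1 ≤ ε := min_le_left _ _
    have : 2 * a = min ε 1 / 2 := by ring
    linarith [this ▸ (by linarith : min ε 1 / 2 < ε)]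
  have ha1 : 2 * a ≤ 1 / 2 := by
    have h1 : min ε 1 ≤ 1 := min_le_right _ _
    simp only [ha_def]; linarith
  -- integrability of the dominating function pieces
  have hlo : Integrable (fun x => f x ^ (1 - 2 * a)) := by
    apply hint; rw [abs_of_nonpos (by linarith)]; linarith
  have hhi : Integrable (fun x => f x ^ (1 + 2 * a)) := by
    apply hint; rw [abs_of_nonneg (by linarith)]; linarith
  have hFint : Integrable f := by
    have := hint 1 (by simpa using hε)
    simpa [Real.rpow_one] using this
  -- the key derivative computation
  have key := hasDerivAt_integral_of_dominated_loc_of_deriv_le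
      (μ := (volume : Measure (Fin m → ℝ))) (x₀ := (1 : ℝ))
      (F := fun q x => f x ^ q)
      (F' := fun q x => f x ^ q * Real.log (f x))
      (bound := fun x => a⁻¹ * ((f x ^ (1 - 2 * a) + f x ^ (1 + 2 * a))
        + (f x ^ (1 - 2 * a) + f x ^ (1 + 2 * a))))
      (Metric.ball_mem_nhds (1 : ℝ) ha0)
      (by
        filter_upwards [eventually_gt_nhds (by norm_num : (0:ℝ) < 1)] with q hq
        exact ((Real.continuous_rpow_const hq.le).measurable.comp
          hfmeas).aestronglyMeasurable)
      (by simpa [Real.rpow_one] using hFint)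
      ((((Real.continuous_rpow_const zero_le_one).measurable.comp hfmeas).mul
        (Real.measurable_log.comp hfmeas)).aestronglyMeasurable)
      ?_ ?_ ?_
  · -- conclude from the derivative
    have hder : HasDerivAt (fun q : ℝ => ∫ x, f x ^ q)
        (∫ x, f x * Real.log (f x)) 1 := by
      have := key.2
      simpa [Real.rpow_one] using this
    have hF1 : (∫ x, f x ^ (1 : ℝ)) = 1 := by simpa [Real.rpow_one] using hf1
    have hslope := hasDerivAt_iff_tendsto_slope.mp hder
    have := hslope.neg
    refine this.congr' ?_
    filter_upwards [self_mem_nhdsWithin] with q hq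
    have hq1 : q - 1 ≠ 0 := sub_ne_zero.2 hq
    simp only [slope_def_field]
    rw [hF1]
    have h : (1 : ℝ) - q = -(q - 1) := by ring
    rw [one_div, h, inv_neg, div_eq_mul_inv]
    ring
  · -- the bound
    refine Eventually.of_forall fun x => fun q hq => ?_
    rcases (hf0 x).lt_or_eq with ht | ht
    · set t := f x with ht_def
      have habs : |Real.log (t ^ a)| ≤ t ^ a + (t ^ a)⁻¹ :=
        abs_log_le_add_inv (Real.rpow_pos_of_pos ht a)
      rw [Real.log_rpow ht, abs_mul, abs_of_nonneg ha0.le,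
        ← Real.rpow_neg ht.le] at habs
      have hlog : |Real.log t| ≤ a⁻¹ * (t ^ a + t ^ (-a)) := by
        rw [le_inv_mul_iff₀ ha0]; linarith
      have hq' : |q - 1| < a := by simpa [Real.dist_eq] using hq
      have hqa : 0 ≤ t ^ q := Real.rpow_nonneg ht.le q
      calc ‖t ^ q * Real.log t‖ = t ^ q * |Real.log t| := by
            rw [norm_mul, Real.norm_eq_abs, Real.norm_eq_abs, abs_of_nonneg hqa]
        _ ≤ t ^ q * (a⁻¹ * (t ^ a + t ^ (-a))) := by
            exact mul_le_mul_of_nonneg_left hlog hqa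
        _ = a⁻¹ * (t ^ (q + a) + t ^ (q - a)) := by
            rw [Real.rpow_add ht, Real.rpow_sub ht, Real.rpow_neg ht.le,
              div_eq_mul_inv]
            ring
        _ ≤ a⁻¹ * ((t ^ (1 - 2*a) + t ^ (1 + 2*a)) + (t ^ (1 - 2*a) + t ^ (1 + 2*a))) := by
            have hcases := abs_lt.mp hq'
            have b1 : t ^ (q + a) ≤ t ^ (1 - 2*a) + t ^ (1 + 2*a) :=
              rpow_le_add_of_mem ht (by linarith) (by linarith)
            have b2 : t ^ (q - a) ≤ t ^ (1 - 2*a) + t ^ (1 + 2*a) :=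
              rpow_le_add_of_mem ht (by linarith) (by linarith)
            have : t ^ (q + a) + t ^ (q - a) ≤
                (t ^ (1 - 2*a) + t ^ (1 + 2*a)) + (t ^ (1 - 2*a) + t ^ (1 + 2*a)) := by
              linarith
            exact mul_le_mul_of_nonneg_left this (by positivity)
    · have hq' : |q - 1| < a := by simpa [Real.dist_eq] using hq
      have hqpos : 0 < q := by
        have := abs_lt.mp hq'; linarith
      simp [← ht, Real.zero_rpow hqpos.ne', Real.zero_rpow (by linarith : (1 : ℝ) - 2*a ≠ 0),
        Real.zero_rpow (by linarith : (1 : ℝ) + 2*a ≠ 0)]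
  · -- integrability of the bound
    exact ((hlo.add hhi).add (hlo.add hhi)).const_mul _
  · -- differentiability
    refine Eventually.of_forall fun x => fun q hq => ?_
    rcases (hf0 x).lt_or_eq with ht | ht
    · exact (Real.hasStrictDerivAt_const_rpow ht q).hasDerivAt
    · have hq' : |q - 1| < a := by simpa [Real.dist_eq] using hq
      have hqpos : 0 < q := by
        have := abs_lt.mp hq'; linarith
      have heq : (fun r : ℝ => f x ^ r) =ᶠ[𝓝 q] fun _ => (0 : ℝ) := by
        filter_upwards [eventually_gt_nhds hqpos] with r hr
        rw [← ht, Real.zero_rpow hr.ne']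
      have h0 : f x ^ q * Real.log (f x) = 0 := by
        rw [← ht, Real.zero_rpow hqpos.ne']; ring
      show HasDerivAt (fun r : ℝ => f x ^ r) (f x ^ q * Real.log (f x)) q
      rw [h0]
      exact (hasDerivAt_const q (0 : ℝ)).congr_of_eventuallyEq heq
end

section
/- Let f : ℝ^m → [0,∞) be a probability density such that ∫ f(x)^q dx < ∞ for all q in some neighborhood of 1 and the Shannon differential entropy H(f) = −∫ f(x) log f(x) dx is finite. Then the Rényi entropy converges to the Shannon entropy as q → 1: lim_{q→1} H*_q(f) = H(f). -/
open MeasureTheory Filter Topology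

/-- For `t > 0` and `a ≤ p ≤ b`, `t ^ p ≤ t ^ a + t ^ b`. -/
lemma rpow_le_add_of_mem_s2 {t a b p : ℝ} (ht : 0 < t) (hap : a ≤ p) (hpb : p ≤ b) :
    t ^ p ≤ t ^ a + t ^ b := by
  rcases le_total t 1 with h | h
  · have := Real.rpow_le_rpow_of_exponent_ge ht h hap
    have hb : 0 ≤ t ^ b := Real.rpow_nonneg ht.le b
    linarith
  · have := Real.rpow_le_rpow_of_exponent_le h hpb
    have ha : 0 ≤ t ^ a := Real.rpow_nonneg ht.le a
    linarith

/-- `|log t| ≤ (t ^ δ + t ^ (-δ)) / δ` for `t > 0`, `δ > 0`. -/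
lemma abs_log_le {t δ : ℝ} (ht : 0 < t) (hδ : 0 < δ) :
    |Real.log t| ≤ (t ^ δ + t ^ (-δ)) / δ := by
  have h1 : Real.log t ≤ t ^ δ / δ := Real.log_le_rpow_div ht.le hδ
  have h2 : Real.log t⁻¹ ≤ (t⁻¹) ^ δ / δ := Real.log_le_rpow_div (inv_nonneg.2 ht.le) hδ
  rw [Real.log_inv, Real.inv_rpow ht.le, ← Real.rpow_neg ht.le] at h2
  have hpos1 : 0 ≤ t ^ δ := Real.rpow_nonneg ht.le δ
  have hpos2 : 0 ≤ t ^ (-δ) := Real.rpow_nonneg ht.le (-δ)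
  rw [abs_le]
  constructor
  · rw [div_eq_mul_inv] at h2 ⊢
    nlinarith [inv_pos.2 hδ]
  · rw [div_eq_mul_inv] at h1 ⊢
    nlinarith [inv_pos.2 hδ]

/-- Main bound: `t ^ q * |log t| ≤ (2/δ) * (t^(1-2δ) + t^(1+2δ))` for `|q - 1| < δ`. -/
lemma rpow_mul_abs_log_le {t δ q : ℝ} (ht : 0 ≤ t) (hδ : 0 < δ) (hq : |q - 1| < δ) :
    t ^ q * |Real.log t| ≤ (2 / δ) * (t ^ (1 - 2*δ) + t ^ (1 + 2*δ)) := by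
  rcases ht.eq_or_lt with h | h
  · subst h
    simp only [Real.log_zero, abs_zero, mul_zero]
    positivity
  · rw [abs_lt] at hq
    have key : t ^ q * |Real.log t| ≤ t ^ q * ((t ^ δ + t ^ (-δ)) / δ) :=
      mul_le_mul_of_nonneg_left (abs_log_le h hδ) (Real.rpow_nonneg ht q)
    refine key.trans ?_
    have e1 : t ^ q * ((t ^ δ + t ^ (-δ)) / δ) = (t ^ (q + δ) + t ^ (q - δ)) / δ := by
      rw [Real.rpow_add h q δ, show q - δ = q + (-δ) by ring, Real.rpow_add h q (-δ)]
      ring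
    rw [e1]
    have b1 : t ^ (q + δ) ≤ t ^ (1 - 2*δ) + t ^ (1 + 2*δ) :=
      rpow_le_add_of_mem_s2 h (by linarith) (by linarith)
    have b2 : t ^ (q - δ) ≤ t ^ (1 - 2*δ) + t ^ (1 + 2*δ) :=
      rpow_le_add_of_mem_s2 h (by linarith) (by linarith)
    rw [div_le_iff₀ hδ]
    have h2 : (2 / δ) * (t ^ (1 - 2*δ) + t ^ (1 + 2*δ)) * δ
        = 2 * (t ^ (1 - 2*δ) + t ^ (1 + 2*δ)) := by field_simp
    rw [h2]
    linarith

/-- **Rényi entropy converges to Shannon entropy as `q → 1`.**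
If `f` is a probability density on `ℝ^m` with `∫ f^q < ∞` for all `q` in a neighborhood
of `1` and finite Shannon differential entropy `H(f) = -∫ f log f`, then
`H*_q(f) = (1/(1-q)) log ∫ f^q → H(f)` as `q → 1`. -/
theorem renyi_tendsto_shannon (m : ℕ)
    (f : (Fin m → ℝ) → ℝ)
    (hf0 : ∀ x, 0 ≤ f x) (hfmeas : Measurable f) (hf1 : ∫ x, f x = 1)
    (hnbhd : ∃ ε > (0 : ℝ), ∀ q : ℝ, |q - 1| < ε → Integrable (fun x => f x ^ q))
    (hent : Integrable (fun x => f x * Real.log (f x))) :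
    Tendsto (fun q : ℝ => (1 / (1 - q)) * Real.log (∫ x, f x ^ q))
      (𝓝[≠] (1 : ℝ)) (𝓝 (-∫ x, f x * Real.log (f x))) := by
  obtain ⟨ε, hε, hint⟩ := hnbhd
  set δ : ℝ := min (ε / 3) (1 / 4) with hδdef
  have hδpos : 0 < δ := lt_min (by linarith) (by norm_num)
  have hδε : 2 * δ < ε := by
    have := min_le_left (ε / 3) (1 / 4); linarith [hδdef ▸ this]
  have hδhalf : 2 * δ ≤ 1 / 2 := by
    have := min_le_right (ε / 3) (1 / 4); linarith [hδdef ▸ this]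
  -- integrability of the dominating functions
  have hint₁ : Integrable (fun x => f x ^ (1 - 2*δ)) := by
    apply hint
    rw [show (1 - 2*δ) - 1 = -(2*δ) by ring, abs_neg, abs_of_pos (by linarith)]
    exact hδε
  have hint₂ : Integrable (fun x => f x ^ (1 + 2*δ)) := by
    apply hint
    rw [show (1 + 2*δ) - 1 = 2*δ by ring, abs_of_pos (by linarith)]
    exact hδε
  -- differentiation under the integral sign
  have key := hasDerivAt_integral_of_dominated_loc_of_deriv_le
    (F := fun (q : ℝ) (x : Fin m → ℝ) => f x ^ q)
    (F' := fun (q : ℝ) (x : Fin m → ℝ) => f x ^ q * Real.log (f x))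
    (x₀ := (1 : ℝ)) (bound := fun x => (2 / δ) * (f x ^ (1 - 2*δ) + f x ^ (1 + 2*δ)))
    (μ := volume) (Metric.ball_mem_nhds (1 : ℝ) hδpos)
    (Eventually.of_forall fun q =>
      ((hfmeas.pow measurable_const).aestronglyMeasurable))
    (by simpa using hint 1 (by simpa using hε))
    (((hfmeas.pow measurable_const).mul hfmeas.log).aestronglyMeasurable)
    (Eventually.of_forall fun x => fun q hq => by
      have hq' : |q - 1| < δ := by simpa [Real.dist_eq] using hq
      have := rpow_mul_abs_log_le (hf0 x) hδpos hq'
      calc ‖f x ^ q * Real.log (f x)‖ = f x ^ q * |Real.log (f x)| := by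
            rw [norm_mul, Real.norm_eq_abs, Real.norm_eq_abs,
              abs_of_nonneg (Real.rpow_nonneg (hf0 x) q)]
        _ ≤ _ := this)
    ((hint₁.add hint₂).const_mul _)
    (Eventually.of_forall fun x => fun q hq => by
      rcases (hf0 x).eq_or_lt with h | h
      · -- f x = 0 : the function is locally constant 0
        have hqpos : 0 < q := by
          have hq' : |q - 1| < δ := by simpa [Real.dist_eq] using hq
          rw [abs_lt] at hq'; linarith
        have heq : (fun p => f x ^ p) =ᶠ[𝓝 q] fun _ => (0 : ℝ) := by
          filter_upwards [eventually_gt_nhds hqpos] with p hp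
          rw [← h, Real.zero_rpow (ne_of_gt hp)]
        have : HasDerivAt (fun p => f x ^ p) 0 q :=
          (hasDerivAt_const q (0 : ℝ)).congr_of_eventuallyEq heq
        simpa [← h, Real.log_zero] using this
      · exact (Real.hasStrictDerivAt_const_rpow h q).hasDerivAt)
  obtain ⟨-, hG⟩ := key
  -- simplify the derivative value
  have hI : (∫ x, f x ^ (1:ℝ) * Real.log (f x)) = ∫ x, f x * Real.log (f x) := by
    simp [Real.rpow_one]
  rw [hI] at hG
  have hG1 : (∫ x, f x ^ (1:ℝ)) = 1 := by simpa [Real.rpow_one] using hf1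
  -- pass to the logarithm
  have hG' : HasDerivAt (fun q : ℝ => ∫ x, f x ^ q)
      (∫ x, f x * Real.log (f x)) 1 := hG
  have hlog : HasDerivAt (fun q : ℝ => Real.log (∫ x, f x ^ q))
      ((∫ x, f x * Real.log (f x)) / 1) 1 := by
    have h := hG'.log (by rw [hG1]; norm_num)
    rwa [hG1] at h
  rw [hasDerivAt_iff_tendsto_slope] at hlog
  have hneg := hlog.neg
  have heq : (fun q : ℝ => (1 / (1 - q)) * Real.log (∫ x, f x ^ q))
      = fun q : ℝ => -(slope (fun q : ℝ => Real.log (∫ x, f x ^ q)) 1 q) := by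
    funext q
    rw [slope_def_field, hG1, Real.log_one, sub_zero,
      show (1 : ℝ) - q = -(q - 1) by ring, one_div, inv_neg, div_eq_mul_inv]
    ring
  rw [heq]
  simpa using hneg
end

section
/- Let f : ℝ^m → [0,∞) be a probability density with support S = {x ∈ ℝ^m : f(x) > 0}, and suppose the Lebesgue measure of S is infinite. Then the Tsallis entropy diverges as q tends to 0 from above: lim_{q→0⁺} H_q(f) = +∞. -/
open MeasureTheory Filter Topology ENNReal

/-- **Divergence of Tsallis entropy as `q → 0⁺` for infinite-measure support.**
If `f` is a probability density on `ℝ^m` whose support `S = {x : f x > 0}` has infinite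
Lebesgue measure, then the (extended-real valued) Tsallis entropy
`H_q(f) = (1/(1-q))(∫_S f^q - 1)` diverges to `+∞` as `q → 0⁺`. -/
theorem tsallis_tendsto_top_of_infinite_support (m : ℕ)
    (f : (Fin m → ℝ) → ℝ)
    (hf0 : ∀ x, 0 ≤ f x) (hfmeas : Measurable f) (hf1 : ∫ x, f x = 1)
    (hS : volume {x : Fin m → ℝ | 0 < f x} = ⊤) :
    Tendsto (fun q : ℝ =>
        ((1 / (1 - q) : ℝ) : EReal) *
          (((∫⁻ x in {x : Fin m → ℝ | 0 < f x}, ENNReal.ofReal (f x) ^ q : ℝ≥0∞) : EReal) - 1))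
      (𝓝[>] (0 : ℝ)) (𝓝 (⊤ : EReal)) := by
  rw [EReal.tendsto_nhds_top_iff_real]
  intro x
  set S := {x : Fin m → ℝ | 0 < f x} with hSdef
  set M : ℝ := max x 0 + 2 with hMdef
  have hM2 : (2 : ℝ) ≤ M := le_add_of_nonneg_left (le_max_right x 0)
  have hxM : x < M - 1 := by
    have := le_max_left x 0
    simp only [hMdef]; linarith
  -- Step A: find ε > 0 such that {y | ε < f y} has measure at least 2M
  have hunion : S = ⋃ n : ℕ, {y | 1 / (n + 1 : ℝ) < f y} := by
    ext y
    simp only [hSdef, Set.mem_setOf_eq, Set.mem_iUnion]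
    constructor
    · intro hy
      exact exists_nat_one_div_lt hy
    · rintro ⟨n, hn⟩
      refine lt_trans ?_ hn
      positivity
  have hdir : Directed (· ⊆ ·) (fun n : ℕ => {y | 1 / (n + 1 : ℝ) < f y}) := by
    apply Monotone.directed_le
    intro a b hab y hy
    simp only [Set.mem_setOf_eq] at hy ⊢
    refine lt_of_le_of_lt ?_ hy
    gcongr
  have hsup : ⨆ n : ℕ, volume {y | 1 / (n + 1 : ℝ) < f y} = ⊤ := by
    rw [← hdir.measure_iUnion, ← hunion, hS]
  obtain ⟨n, hn⟩ : ∃ n : ℕ, ENNReal.ofReal (2 * M) < volume {y | 1 / (n + 1 : ℝ) < f y} := by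
    have : ENNReal.ofReal (2 * M) < ⨆ n : ℕ, volume {y | 1 / (n + 1 : ℝ) < f y} := by
      rw [hsup]; exact ENNReal.ofReal_lt_top.trans_le le_top
    exact lt_iSup_iff.mp this
  set ε : ℝ := 1 / (n + 1 : ℝ) with hεdef
  have hεpos : 0 < ε := by positivity
  set A : Set (Fin m → ℝ) := {y | ε < f y} with hAdef
  have hAS : A ⊆ S := fun y hy => lt_trans hεpos hy
  have hAmeas : MeasurableSet A := measurableSet_lt measurable_const hfmeas
  -- Step B: eventual facts about q
  have hev1 : ∀ᶠ q : ℝ in 𝓝[>] 0, 1 / 2 < ε ^ q := by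
    apply eventually_nhdsWithin_of_eventually_nhds
    have hc : ContinuousAt (fun q : ℝ => ε ^ q) 0 :=
      Real.continuousAt_const_rpow hεpos.ne'
    have := hc.tendsto
    rw [Real.rpow_zero] at this
    exact this.eventually (eventually_gt_nhds (by norm_num))
  have hev2 : ∀ᶠ q : ℝ in 𝓝[>] 0, q < 1 / 2 :=
    eventually_nhdsWithin_of_eventually_nhds (eventually_lt_nhds (by norm_num))
  have hev3 : ∀ᶠ q : ℝ in 𝓝[>] 0, 0 < q := eventually_mem_nhdsWithin
  filter_upwards [hev1, hev2, hev3] with q hhalf hq2 hq0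
  -- Step C: lower bound for the integral
  set I : ℝ≥0∞ := ∫⁻ y in S, ENNReal.ofReal (f y) ^ q with hIdef
  have hMI : ENNReal.ofReal M ≤ I := by
    have h1 : ∫⁻ y in A, ENNReal.ofReal (f y) ^ q ≤ I :=
      lintegral_mono_set hAS
    have h2 : ENNReal.ofReal ε ^ q * volume A ≤ ∫⁻ y in A, ENNReal.ofReal (f y) ^ q := by
      rw [← setLIntegral_const A (ENNReal.ofReal ε ^ q)]
      refine setLIntegral_mono' hAmeas fun y hy => ?_
      exact ENNReal.rpow_le_rpow (ENNReal.ofReal_le_ofReal hy.le) hq0.le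
    have h3 : ENNReal.ofReal M ≤ ENNReal.ofReal ε ^ q * volume A := by
      calc ENNReal.ofReal M = ENNReal.ofReal (1 / 2) * ENNReal.ofReal (2 * M) := by
            rw [← ENNReal.ofReal_mul (by norm_num)]
            rw [show (1 / 2 : ℝ) * (2 * M) = M by ring]
        _ ≤ ENNReal.ofReal ε ^ q * volume A := by
            refine mul_le_mul' ?_ hn.le
            rw [ENNReal.ofReal_rpow_of_pos hεpos]
            exact ENNReal.ofReal_le_ofReal hhalf.le
    exact h3.trans (h2.trans h1)
  -- Step D: conclude on EReal
  have h1q : 0 < 1 - q := by linarith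
  have hfrac : 1 ≤ 1 / (1 - q) := by
    rw [le_div_iff₀ h1q]; linarith
  rcases eq_or_ne I ⊤ with hI | hI
  · rw [hI]
    have : ((⊤ : ℝ≥0∞) : EReal) - 1 = ⊤ := by
      rw [EReal.coe_ennreal_top]
      exact EReal.top_sub_coe 1
    rw [this, EReal.coe_mul_top_of_pos (by positivity)]
    exact EReal.coe_lt_top x
  · have hr : ((I.toReal : ℝ) : EReal) = (I : EReal) := by
      conv_rhs => rw [← ENNReal.ofReal_toReal hI]
      rw [EReal.coe_ennreal_ofReal, max_eq_left ENNReal.toReal_nonneg]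
    have hMr : M ≤ I.toReal := by
      rw [← ENNReal.ofReal_le_iff_le_toReal hI]
      exact hMI
    rw [← hr]
    have : ((1 : ℝ) : EReal) = (1 : EReal) := rfl
    rw [← this, ← EReal.coe_sub, ← EReal.coe_mul, EReal.coe_lt_coe_iff]
    nlinarith [hxM, hMr, hfrac, h1q]
end

section
/- For every integer m ≥ 1, shape parameter s > 0, μ ∈ ℝ^m, and symmetric positive definite Σ ∈ ℝ^{m×m}, the normalization constant of the multivariate generalized Gaussian density has the closed form C(m, s, Σ) = ∫_{ℝ^m} exp(−(1/2)[(x−μ)^T Σ^{−1} (x−μ)]^s) dx = √(det Σ) · π^{m/2} · 2^{m/(2s)} · Γ(m/(2s) + 1) / Γ(m/2 + 1). -/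
open MeasureTheory Matrix

private lemma rpow_mul_natCast (x : ℝ) (hx : 0 ≤ x) (a : ℝ) (m : ℕ) :
    (x ^ a) ^ (m : ℕ) = x ^ (a * m) := by
  rw [← Real.rpow_natCast (x ^ a) m, ← Real.rpow_mul hx]

/-- The radial integral over Euclidean space. -/
private lemma gg_radial (m : ℕ) (hm : 1 ≤ m) (p : ℝ) (hp : 0 < p) :
    ∫ x : EuclideanSpace ℝ (Fin m), Real.exp (-(1 / 2) * ‖x‖ ^ p) =
      Real.pi ^ ((m : ℝ) / 2) * 2 ^ ((m : ℝ) / p) * Real.Gamma ((m : ℝ) / p + 1) /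
        Real.Gamma ((m : ℝ) / 2 + 1) := by
  have hΓ2 : 0 < Real.Gamma ((m : ℝ) / 2 + 1) := Real.Gamma_pos_of_pos (by positivity)
  have hΓp : 0 < Real.Gamma ((m : ℝ) / p + 1) := Real.Gamma_pos_of_pos (by positivity)
  -- Step 1: the unscaled integral.
  have hK : ∫ x : EuclideanSpace ℝ (Fin m), Real.exp (-‖x‖ ^ p) =
      Real.sqrt Real.pi ^ m * Real.Gamma ((m : ℝ) / p + 1) / Real.Gamma ((m : ℝ) / 2 + 1) := by
    have h1 := MeasureTheory.measure_unitBall_eq_integral_div_gamma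
      (volume : Measure (EuclideanSpace ℝ (Fin m))) hp
    haveI : Nonempty (Fin m) := Fin.pos_iff_nonempty.mp hm
    have h2 := EuclideanSpace.volume_ball (Fin m) (0 : EuclideanSpace ℝ (Fin m)) 1
    rw [h2] at h1
    simp only [ENNReal.ofReal_one, one_pow, one_mul, Fintype.card_fin,
      finrank_euclideanSpace, Fintype.card_fin] at h1
    have hKnn : 0 ≤ ∫ x : EuclideanSpace ℝ (Fin m), Real.exp (-‖x‖ ^ p) :=
      integral_nonneg fun x => (Real.exp_pos _).le
    rw [ENNReal.ofReal_eq_ofReal_iff (by positivity) (by positivity)] at h1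
    rw [div_eq_div_iff hΓ2.ne' hΓp.ne'] at h1
    rw [eq_div_iff hΓ2.ne']
    linarith
  -- Step 2: scaling.
  have hc : (0 : ℝ) < (2 : ℝ) ^ (-1 / p) := Real.rpow_pos_of_pos two_pos _
  have hpt : ∀ x : EuclideanSpace ℝ (Fin m),
      Real.exp (-‖((2 : ℝ) ^ (-1 / p)) • x‖ ^ p) = Real.exp (-(1 / 2) * ‖x‖ ^ p) := by
    intro x
    rw [norm_smul, Real.norm_eq_abs, abs_of_pos hc,
      Real.mul_rpow hc.le (norm_nonneg x),
      ← Real.rpow_mul (by norm_num : (0:ℝ) ≤ 2), div_mul_cancel₀ _ hp.ne',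
      Real.rpow_neg_one]
    norm_num
  have hscale := MeasureTheory.Measure.integral_comp_smul
    (volume : Measure (EuclideanSpace ℝ (Fin m)))
    (fun x => Real.exp (-‖x‖ ^ p)) ((2 : ℝ) ^ (-1 / p))
  simp only [hpt] at hscale
  rw [hscale, hK]
  have hfr : Module.finrank ℝ (EuclideanSpace ℝ (Fin m)) = m := finrank_euclideanSpace_fin
  rw [hfr]
  have hpow : ((2 : ℝ) ^ (-1 / p)) ^ (m : ℕ) = (2 : ℝ) ^ (-((m : ℝ) / p)) := by
    rw [rpow_mul_natCast 2 (by norm_num) (-1 / p) m]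
    congr 1
    ring
  rw [hpow, ← Real.rpow_neg (by norm_num : (0:ℝ) ≤ 2), neg_neg,
    abs_of_pos (Real.rpow_pos_of_pos two_pos _)]
  have hπ : Real.sqrt Real.pi ^ m = Real.pi ^ ((m : ℝ) / 2) := by
    rw [Real.sqrt_eq_rpow, rpow_mul_natCast Real.pi Real.pi_pos.le (1/2) m]
    congr 1
    ring
  rw [smul_eq_mul, hπ]
  ring

/-- **Closed form of the generalized Gaussian normalization constant.**
For `s > 0`, `μ ∈ ℝ^m` and `Σ` symmetric positive definite,
`C(m,s,Σ) = ∫ exp(-(1/2)[(x-μ)^T Σ⁻¹ (x-μ)]^s) dx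
          = √(det Σ) π^{m/2} 2^{m/(2s)} Γ(m/(2s)+1) / Γ(m/2+1)`. -/
theorem generalizedGaussian_normalization (m : ℕ) (hm : 1 ≤ m) (s : ℝ) (hs : 0 < s)
    (μ : Fin m → ℝ) (S : Matrix (Fin m) (Fin m) ℝ)
    (hsymm : S.IsSymm) (hpd : S.PosDef) :
    ∫ x : Fin m → ℝ, Real.exp (-(1 / 2) * ((x - μ) ⬝ᵥ (S⁻¹ *ᵥ (x - μ))) ^ s) =
      Real.sqrt S.det * Real.pi ^ ((m : ℝ) / 2) * 2 ^ ((m : ℝ) / (2 * s)) *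
        Real.Gamma ((m : ℝ) / (2 * s) + 1) / Real.Gamma ((m : ℝ) / 2 + 1) := by
  have hinv : (S⁻¹).PosDef := hpd.inv
  set A : Matrix (Fin m) (Fin m) ℝ := (open MatrixOrder in CFC.sqrt (S⁻¹)) with hAdef
  have hAsemi : A.PosSemidef := open MatrixOrder in Matrix.nonneg_iff_posSemidef.mp (CFC.sqrt_nonneg _)
  have hAherm : Aᵀ = A := by
    have := hAsemi.1
    simpa [Matrix.IsHermitian, Matrix.conjTranspose_eq_transpose_of_trivial] using this
  have hAA : A * A = S⁻¹ := open MatrixOrder in CFC.sqrt_mul_sqrt_self _ hinv.posSemidef.nonneg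
  have hdet2 : A.det * A.det = (S.det)⁻¹ := by
    rw [← Matrix.det_mul, hAA, Matrix.det_nonsing_inv, Ring.inverse_eq_inv']
  have hSdet : 0 < S.det := hpd.det_pos
  have hAdet : A.det ≠ 0 := by
    intro h
    rw [h, mul_zero] at hdet2
    exact (inv_pos.mpr hSdet).ne' hdet2.symm
  have hAabs : |A.det|⁻¹ = Real.sqrt S.det := by
    rw [← Real.sqrt_sq_eq_abs, sq, hdet2, Real.sqrt_inv, inv_inv]
  -- the radially symmetric integrand
  set g : (Fin m → ℝ) → ℝ := fun z => Real.exp (-(1 / 2) * (z ⬝ᵥ z) ^ s) with hgdef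
  have hgcont : Continuous g := by
    have h1 : Continuous fun z : Fin m → ℝ => z ⬝ᵥ z := by
      simp only [dotProduct]
      exact continuous_finset_sum _ fun i _ => (continuous_apply i).mul (continuous_apply i)
    have h2 : Continuous fun t : ℝ => t ^ s := by
      rw [continuous_iff_continuousAt]
      intro t
      exact Real.continuousAt_rpow_const t s (Or.inr hs.le)
    exact Real.continuous_exp.comp (continuous_const.mul (h2.comp h1))
  -- Step 1: translation.
  have step1 : ∫ x : Fin m → ℝ, Real.exp (-(1 / 2) * ((x - μ) ⬝ᵥ (S⁻¹ *ᵥ (x - μ))) ^ s) =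
      ∫ x : Fin m → ℝ, Real.exp (-(1 / 2) * (x ⬝ᵥ (S⁻¹ *ᵥ x)) ^ s) :=
    integral_sub_right_eq_self (fun y => Real.exp (-(1 / 2) * (y ⬝ᵥ (S⁻¹ *ᵥ y)) ^ s)) μ
  -- Step 2: quadratic form as a dot product square.
  have hquad : ∀ x : Fin m → ℝ, x ⬝ᵥ (S⁻¹ *ᵥ x) = (A *ᵥ x) ⬝ᵥ (A *ᵥ x) := by
    intro x
    rw [← hAA, ← Matrix.mulVec_mulVec, Matrix.dotProduct_mulVec]
    congr 1
    rw [← Matrix.mulVec_transpose, hAherm]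
  -- Step 3: linear change of variables.
  have step3 : ∫ x : Fin m → ℝ, g (A *ᵥ x) = |A.det|⁻¹ * ∫ z : Fin m → ℝ, g z := by
    have hdetL : LinearMap.det (Matrix.toLin' A) ≠ 0 := by
      rwa [LinearMap.det_toLin']
    have hmap := MeasureTheory.Measure.map_linearMap_addHaar_eq_smul_addHaar
      (volume : Measure (Fin m → ℝ)) hdetL
    have hmeas : AEMeasurable (Matrix.toLin' A) (volume : Measure (Fin m → ℝ)) :=
      ((Matrix.toLin' A).continuous_of_finiteDimensional).measurable.aemeasurable
    calc ∫ x : Fin m → ℝ, g (A *ᵥ x) = ∫ x : Fin m → ℝ, g (Matrix.toLin' A x) := by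
          simp only [Matrix.toLin'_apply]
      _ = ∫ z, g z ∂(Measure.map (Matrix.toLin' A) volume) :=
          (integral_map hmeas hgcont.aestronglyMeasurable).symm
      _ = |A.det|⁻¹ * ∫ z : Fin m → ℝ, g z := by
          rw [hmap, LinearMap.det_toLin', integral_smul_measure,
            ENNReal.toReal_ofReal (abs_nonneg _), abs_inv, smul_eq_mul]
  -- Step 4: pass to Euclidean space.
  have step4 : ∫ z : Fin m → ℝ, g z =
      ∫ x : EuclideanSpace ℝ (Fin m), Real.exp (-(1 / 2) * ‖x‖ ^ (2 * s)) := by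
    have hmp := (EuclideanSpace.volume_preserving_symm_measurableEquiv_toLp (Fin m)).integral_comp
      (MeasurableEquiv.toLp 2 (Fin m → ℝ)).symm.measurableEmbedding g
    rw [← hmp]
    refine integral_congr_ae (Filter.EventuallyEq.of_eq (funext fun x => ?_))
    have hx : (MeasurableEquiv.toLp 2 (Fin m → ℝ)).symm x ⬝ᵥ
        (MeasurableEquiv.toLp 2 (Fin m → ℝ)).symm x = ‖x‖ ^ (2 : ℕ) := by
      rw [EuclideanSpace.norm_eq, Real.sq_sqrt (by positivity)]
      simp [dotProduct, Real.norm_eq_abs, sq, abs_mul_abs_self]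
    rw [hgdef]
    simp only []
    rw [hx, ← Real.rpow_natCast ‖x‖ 2, ← Real.rpow_mul (norm_nonneg x)]
    norm_num
  rw [step1]
  simp_rw [hquad]
  have : (fun x : Fin m → ℝ => Real.exp (-(1 / 2) * ((A *ᵥ x) ⬝ᵥ (A *ᵥ x)) ^ s)) =
      fun x => g (A *ᵥ x) := rfl
  rw [this]
  rw [step3, step4, gg_radial m hm (2 * s) (by positivity), hAabs]
  ring
end

section
/- Let f^{GG} be the multivariate generalized Gaussian density on ℝ^m with parameters s > 0, μ ∈ ℝ^m, and symmetric positive definite Σ, and let q > 0, q ≠ 1. Then ∫_{ℝ^m} [f^{GG}(x)]^q dx = q^{−m/(2s)} C(m,s,Σ)^{1−q}, and consequently the Tsallis entropy of f^{GG} is H_q(f^{GG}) = (1/(1−q)) ( q^{−m/(2s)} C(m,s,Σ)^{1−q} − 1 ). -/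
set_option maxHeartbeats 1000000


open MeasureTheory Matrix

/-- **Tsallis entropy of the multivariate generalized Gaussian distribution.**
Let `f^{GG}(x) = C⁻¹ exp(-(1/2)[(x-μ)^T Σ⁻¹ (x-μ)]^s)` with normalization constant
`C = C(m,s,Σ)`. Then for `q > 0`, `q ≠ 1`,
`∫ (f^{GG})^q = q^{-m/(2s)} C^{1-q}` and
`H_q(f^{GG}) = (1/(1-q)) (q^{-m/(2s)} C^{1-q} - 1)`. -/
theorem tsallis_generalizedGaussian (m : ℕ) (hm : 1 ≤ m) (s : ℝ) (hs : 0 < s)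
    (μ : Fin m → ℝ) (S : Matrix (Fin m) (Fin m) ℝ)
    (hsymm : S.IsSymm) (hpd : S.PosDef)
    (q : ℝ) (hq0 : 0 < q) (hq1 : q ≠ 1)
    (C : ℝ)
    (hC : C = ∫ x : Fin m → ℝ, Real.exp (-(1 / 2) * ((x - μ) ⬝ᵥ (S⁻¹ *ᵥ (x - μ))) ^ s)) :
    (∫ x : Fin m → ℝ,
        (C⁻¹ * Real.exp (-(1 / 2) * ((x - μ) ⬝ᵥ (S⁻¹ *ᵥ (x - μ))) ^ s)) ^ q) =
      q ^ (-(m : ℝ) / (2 * s)) * C ^ (1 - q) ∧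
    (1 / (1 - q)) *
        ((∫ x : Fin m → ℝ,
          (C⁻¹ * Real.exp (-(1 / 2) * ((x - μ) ⬝ᵥ (S⁻¹ *ᵥ (x - μ))) ^ s)) ^ q) - 1) =
      (1 / (1 - q)) * (q ^ (-(m : ℝ) / (2 * s)) * C ^ (1 - q) - 1) := by
  have hQ : ∀ y : Fin m → ℝ, 0 ≤ y ⬝ᵥ S⁻¹ *ᵥ y := by
    intro y
    have := hpd.inv.posSemidef.dotProduct_mulVec_nonneg y
    simpa using this
  have hC0 : 0 ≤ C := by
    rw [hC]; exact integral_nonneg fun x => (Real.exp_pos _).le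
  have main : (∫ x : Fin m → ℝ,
        (C⁻¹ * Real.exp (-(1 / 2) * ((x - μ) ⬝ᵥ (S⁻¹ *ᵥ (x - μ))) ^ s)) ^ q) =
      q ^ (-(m : ℝ) / (2 * s)) * C ^ (1 - q) := by
    rcases eq_or_lt_of_le hC0 with h0 | hCpos
    · have : (fun x : Fin m → ℝ =>
          (C⁻¹ * Real.exp (-(1 / 2) * ((x - μ) ⬝ᵥ (S⁻¹ *ᵥ (x - μ))) ^ s)) ^ q)
          = fun _ => 0 := by
        funext x
        rw [← h0]
        simp [Real.zero_rpow hq0.ne']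
      rw [this, ← h0, Real.zero_rpow (by intro h; exact hq1 (by linarith [sub_eq_zero.mp h]))]
      simp
    -- C > 0 case
    have key : (∫ x : Fin m → ℝ,
        Real.exp (-(1 / 2) * (q * ((x - μ) ⬝ᵥ (S⁻¹ *ᵥ (x - μ))) ^ s))) =
        q ^ (-(m : ℝ) / (2 * s)) * C := by
      set c : ℝ := q ^ (1 / (2 * s)) with hc
      have hcpos : 0 < c := Real.rpow_pos_of_pos hq0 _
      have hcsq : ∀ y : Fin m → ℝ, ((c • y) ⬝ᵥ S⁻¹ *ᵥ (c • y)) ^ s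
          = q * (y ⬝ᵥ S⁻¹ *ᵥ y) ^ s := by
        intro y
        have h1 : (c • y) ⬝ᵥ S⁻¹ *ᵥ (c • y) = c ^ 2 * (y ⬝ᵥ S⁻¹ *ᵥ y) := by
          rw [smul_dotProduct, mulVec_smul, dotProduct_smul]
          simp [smul_eq_mul]; ring
        rw [h1, Real.mul_rpow (by positivity) (hQ y)]
        congr 1
        rw [← Real.rpow_natCast c 2, ← Real.rpow_mul hq0.le, ← Real.rpow_mul hq0.le]
        rw [show 1 / (2 * s) * (2 : ℕ) * s = 1 by field_simp; norm_num]
        exact Real.rpow_one q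
      have trans1 : (∫ x : Fin m → ℝ,
          Real.exp (-(1 / 2) * (q * ((x - μ) ⬝ᵥ (S⁻¹ *ᵥ (x - μ))) ^ s)))
          = ∫ y : Fin m → ℝ, Real.exp (-(1 / 2) * (q * (y ⬝ᵥ (S⁻¹ *ᵥ y)) ^ s)) :=
        integral_sub_right_eq_self (fun y => Real.exp (-(1 / 2) * (q * (y ⬝ᵥ (S⁻¹ *ᵥ y)) ^ s))) μ
      have trans2 : C = ∫ y : Fin m → ℝ, Real.exp (-(1 / 2) * ((y ⬝ᵥ (S⁻¹ *ᵥ y))) ^ s) := by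
        rw [hC]
        exact integral_sub_right_eq_self
          (fun y => Real.exp (-(1 / 2) * ((y ⬝ᵥ (S⁻¹ *ᵥ y))) ^ s)) μ
      have smul_eq : (∫ y : Fin m → ℝ, Real.exp (-(1 / 2) * (q * (y ⬝ᵥ (S⁻¹ *ᵥ y)) ^ s)))
          = ∫ y : Fin m → ℝ,
            (fun z : Fin m → ℝ => Real.exp (-(1 / 2) * ((z ⬝ᵥ (S⁻¹ *ᵥ z))) ^ s)) (c • y) := by
        congr 1; funext y
        simp only []
        rw [hcsq y]
      rw [trans1, smul_eq,
        MeasureTheory.Measure.integral_comp_smul volume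
          (fun z : Fin m → ℝ => Real.exp (-(1 / 2) * ((z ⬝ᵥ (S⁻¹ *ᵥ z))) ^ s)) c,
        ← trans2]
      have hfr : Module.finrank ℝ (Fin m → ℝ) = m := by simp
      have hcm : |(c ^ m)⁻¹| = q ^ (-(m : ℝ) / (2 * s)) := by
        rw [abs_of_nonneg (by positivity), ← Real.rpow_natCast c m,
          ← Real.rpow_mul hq0.le, ← Real.rpow_neg hq0.le]
        congr 1
        field_simp
      rw [hfr, smul_eq_mul, hcm]
    have pointwise : ∀ x : Fin m → ℝ,
        (C⁻¹ * Real.exp (-(1 / 2) * ((x - μ) ⬝ᵥ (S⁻¹ *ᵥ (x - μ))) ^ s)) ^ q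
        = C ^ (-q) * Real.exp (-(1 / 2) * (q * ((x - μ) ⬝ᵥ (S⁻¹ *ᵥ (x - μ))) ^ s)) := by
      intro x
      rw [Real.mul_rpow (inv_nonneg.mpr hC0) (Real.exp_pos _).le,
        Real.inv_rpow hC0, ← Real.rpow_neg hC0, ← Real.exp_mul]
      ring_nf
    simp_rw [pointwise]
    rw [MeasureTheory.integral_const_mul, key]
    rw [show C ^ (-q) * (q ^ (-(m : ℝ) / (2 * s)) * C)
        = q ^ (-(m : ℝ) / (2 * s)) * (C ^ (-q) * C ^ (1 : ℝ)) by rw [Real.rpow_one]; ring,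
      ← Real.rpow_add hCpos, show -q + 1 = 1 - q by ring]
  exact ⟨main, by rw [main]⟩
end

section
/- Let f(x; m, s) = [Γ(m/2+1) / (Γ(m/s+1) π^{m/2} 2^{m/s})] exp(−(1/2)‖x‖^s) be the isotropic exponential power density IEP_m(s) on ℝ^m, with s > 0, and write A(m,s) = π^{m/2} 2^{m/s} Γ(m/s+1)/Γ(m/2+1) for its normalization constant. Then for every q > 0, q ≠ 1, the Tsallis entropy is H_q(f(·; m, s)) = (1/(1−q)) ( q^{−m/s} A(m,s)^{1−q} − 1 ). -/
open MeasureTheory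

lemma integral_exp_neg_norm_rpow_aux (m : ℕ) (hm : 1 ≤ m) (s : ℝ) (hs : 0 < s) :
    ∫ x : EuclideanSpace ℝ (Fin m), Real.exp (-‖x‖ ^ s) =
      Real.Gamma ((m : ℝ) / s + 1) * (Real.pi ^ ((m : ℝ) / 2) / Real.Gamma ((m : ℝ) / 2 + 1)) := by
  haveI : Nonempty (Fin m) := ⟨⟨0, hm⟩⟩
  have h1 := MeasureTheory.measure_unitBall_eq_integral_div_gamma
    (volume : Measure (EuclideanSpace ℝ (Fin m))) hs
  rw [finrank_euclideanSpace_fin] at h1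
  have h2 := EuclideanSpace.volume_ball (Fin m) (0 : EuclideanSpace ℝ (Fin m)) 1
  rw [Fintype.card_fin, ENNReal.ofReal_one, one_pow, one_mul] at h2
  have hIeq : (∫ x : EuclideanSpace ℝ (Fin m), Real.exp (-‖x‖ ^ s)) /
      Real.Gamma ((m : ℝ) / s + 1) = Real.sqrt Real.pi ^ m / Real.Gamma ((m : ℝ) / 2 + 1) := by
    have hGs : 0 < Real.Gamma ((m : ℝ) / s + 1) :=
      Real.Gamma_pos_of_pos (by positivity)
    have hGh : 0 < Real.Gamma ((m : ℝ) / 2 + 1) :=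
      Real.Gamma_pos_of_pos (by positivity)
    have hInn : 0 ≤ ∫ x : EuclideanSpace ℝ (Fin m), Real.exp (-‖x‖ ^ s) :=
      integral_nonneg fun x => (Real.exp_pos _).le
    have := h1.symm.trans h2
    rw [ENNReal.ofReal_eq_ofReal_iff (by positivity) (by positivity)] at this
    exact this
  have hsqrt : Real.sqrt Real.pi ^ m = Real.pi ^ ((m : ℝ) / 2) := by
    rw [Real.sqrt_eq_rpow, ← Real.rpow_natCast (Real.pi ^ ((1 : ℝ) / 2)) m,
      ← Real.rpow_mul Real.pi_pos.le]
    ring_nf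
  have hGs : 0 < Real.Gamma ((m : ℝ) / s + 1) := Real.Gamma_pos_of_pos (by positivity)
  rw [hsqrt] at hIeq
  field_simp at hIeq ⊢
  linarith [hIeq]

lemma integral_exp_neg_mul_norm_rpow_aux (m : ℕ) (hm : 1 ≤ m) (s b : ℝ) (hs : 0 < s)
    (hb : 0 < b) :
    ∫ x : EuclideanSpace ℝ (Fin m), Real.exp (-b * ‖x‖ ^ s) =
      b ^ (-(m : ℝ) / s) * (Real.Gamma ((m : ℝ) / s + 1) *
        (Real.pi ^ ((m : ℝ) / 2) / Real.Gamma ((m : ℝ) / 2 + 1))) := by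
  set R : ℝ := b ^ (1 / s) with hR
  have hRpos : 0 < R := Real.rpow_pos_of_pos hb _
  have key : ∀ x : EuclideanSpace ℝ (Fin m),
      Real.exp (-b * ‖x‖ ^ s) = Real.exp (-‖R • x‖ ^ s) := by
    intro x
    congr 1
    rw [norm_smul, Real.norm_eq_abs, abs_of_pos hRpos,
      Real.mul_rpow hRpos.le (norm_nonneg x), hR, ← Real.rpow_mul hb.le, one_div,
      inv_mul_cancel₀ hs.ne', Real.rpow_one]
    ring
  simp_rw [key]
  rw [MeasureTheory.Measure.integral_comp_smul_of_nonneg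
    (volume : Measure (EuclideanSpace ℝ (Fin m)))
    (fun y : EuclideanSpace ℝ (Fin m) => Real.exp (-‖y‖ ^ s)) R (hR := hRpos.le)]
  rw [integral_exp_neg_norm_rpow_aux m hm s hs, finrank_euclideanSpace_fin]
  have : (R ^ m)⁻¹ = b ^ (-(m : ℝ) / s) := by
    rw [hR, ← Real.rpow_natCast (b ^ ((1 : ℝ) / s)) m, ← Real.rpow_mul hb.le,
      ← Real.rpow_neg hb.le]
    congr 1
    field_simp
  rw [smul_eq_mul, this]

/-- **Tsallis entropy of the isotropic exponential power distribution `IEP_m(s)`.**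
With density `f(x; m, s) = [Γ(m/2+1) / (Γ(m/s+1) π^{m/2} 2^{m/s})] exp(-(1/2)‖x‖^s)`
and normalization constant `A(m,s) = π^{m/2} 2^{m/s} Γ(m/s+1)/Γ(m/2+1)`, the Tsallis
entropy of order `q > 0`, `q ≠ 1`, is
`H_q(f) = (1/(1-q)) (q^{-m/s} A(m,s)^{1-q} - 1)`. -/
theorem tsallis_isotropicExponentialPower (m : ℕ) (hm : 1 ≤ m) (s : ℝ) (hs : 0 < s)
    (q : ℝ) (hq0 : 0 < q) (hq1 : q ≠ 1)
    (A : ℝ)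
    (hA : A = Real.pi ^ ((m : ℝ) / 2) * 2 ^ ((m : ℝ) / s) * Real.Gamma ((m : ℝ) / s + 1) /
      Real.Gamma ((m : ℝ) / 2 + 1)) :
    (1 / (1 - q)) *
        ((∫ x : EuclideanSpace ℝ (Fin m),
          ((Real.Gamma ((m : ℝ) / 2 + 1) /
              (Real.Gamma ((m : ℝ) / s + 1) * Real.pi ^ ((m : ℝ) / 2) * 2 ^ ((m : ℝ) / s))) *
            Real.exp (-(1 / 2) * ‖x‖ ^ s)) ^ q) - 1) =
      (1 / (1 - q)) * (q ^ (-(m : ℝ) / s) * A ^ (1 - q) - 1) := by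
  set Γs := Real.Gamma ((m : ℝ) / s + 1) with hΓs
  set Γh := Real.Gamma ((m : ℝ) / 2 + 1) with hΓh
  have hGs : 0 < Γs := Real.Gamma_pos_of_pos (by positivity)
  have hGh : 0 < Γh := Real.Gamma_pos_of_pos (by positivity)
  set C : ℝ := Γh / (Γs * Real.pi ^ ((m : ℝ) / 2) * 2 ^ ((m : ℝ) / s)) with hC
  have hπ : (0 : ℝ) < Real.pi ^ ((m : ℝ) / 2) := Real.rpow_pos_of_pos Real.pi_pos _
  have h2p : (0 : ℝ) < (2 : ℝ) ^ ((m : ℝ) / s) := Real.rpow_pos_of_pos two_pos _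
  have hCpos : 0 < C := by positivity
  have hApos : 0 < A := by rw [hA]; positivity
  have hCA : C = A⁻¹ := by rw [hC, hA, inv_div]; ring
  have hq2 : (0 : ℝ) < q / 2 := by positivity
  have hpoint : ∀ x : EuclideanSpace ℝ (Fin m),
      (C * Real.exp (-(1 / 2) * ‖x‖ ^ s)) ^ q
        = C ^ q * Real.exp (-(q / 2) * ‖x‖ ^ s) := by
    intro x
    rw [Real.mul_rpow hCpos.le (Real.exp_pos _).le, ← Real.exp_mul]
    ring_nf
  simp_rw [hpoint]
  rw [MeasureTheory.integral_const_mul,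
    integral_exp_neg_mul_norm_rpow_aux m hm s (q / 2) hs hq2]
  congr 2
  have hq2r : (q / 2 : ℝ) ^ (-(m : ℝ) / s) =
      q ^ (-(m : ℝ) / s) * (2 : ℝ) ^ ((m : ℝ) / s) := by
    rw [Real.div_rpow hq0.le two_pos.le, neg_div, Real.rpow_neg two_pos.le, div_eq_mul_inv, inv_inv]
  have hCq : C ^ q = (A ^ q)⁻¹ := by
    rw [hCA, Real.inv_rpow hApos.le]
  have hA1q : A ^ (1 - q) = A * (A ^ q)⁻¹ := by
    rw [sub_eq_add_neg, Real.rpow_add hApos, Real.rpow_one, Real.rpow_neg hApos.le]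
  rw [hq2r, hCq, hA1q]
  have hAexp : (2 : ℝ) ^ ((m : ℝ) / s) * (Γs * (Real.pi ^ ((m : ℝ) / 2) / Γh)) = A := by
    rw [hA]; field_simp
  calc (A ^ q)⁻¹ * (q ^ (-(m : ℝ) / s) * (2 : ℝ) ^ ((m : ℝ) / s) *
        (Γs * (Real.pi ^ ((m : ℝ) / 2) / Γh)))
      = q ^ (-(m : ℝ) / s) * ((2 : ℝ) ^ ((m : ℝ) / s) *
        (Γs * (Real.pi ^ ((m : ℝ) / 2) / Γh))) * (A ^ q)⁻¹ := by ring
    _ = q ^ (-(m : ℝ) / s) * (A * (A ^ q)⁻¹) := by rw [hAexp]; ring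
end
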